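/- Let h, g ∈ ℂ^N be linearly independent, σ > 0, R₀ > 0, P_min ≥ 0, and h₀, g₀ ∈ ℂ with 4^{R₀}|g₀|² ≠ |h₀|². Set ζ = (4^{R₀} − 1)σ²/(|h₀|² − 4^{R₀}|g₀|²) and R̃ = (h h† − 4^{R₀} g g†)/(4^{R₀}|g₀|² − |h₀|²), and let λ₁ > 0 and λ₂ < 0 be the two nonzero eigenvalues of R̃. Then the minimum of P_s + ‖w‖² over all P_s ≥ P_min and w ∈ ℂ^N satisfying σ² + P_s|h₀|² + |⟨h, w⟩|² = 4^{R₀}(σ² + P_s|g₀|² + |⟨g, w⟩|²) equals: ζ if ζ ≥ P_min and λ₂ ≥ −1; P_min + (ζ − P_min)/(−λ₂) if ζ ≥ P_min and λ₂ < −1; and P_min + (P_min − ζ)/λ₁ if ζ < P_min. -/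

import Mathlib

open ComplexConjugate

namespace Stmt17Aux

variable {N : ℕ}

abbrev E (N : ℕ) := EuclideanSpace ℂ (Fin N)

section
variable (h g : E N) (d α : ℝ) (Rt : E N → E N)
variable (hRt : ∀ x, Rt x = ((d:ℝ):ℂ)⁻¹ • ((inner ℂ h x : ℂ) • h - ((α:ℝ):ℂ) • ((inner ℂ g x : ℂ) • g)))

include hRt

lemma rt_inner : ∀ x y : E N, (inner ℂ x (Rt y) : ℂ) =
    ((d:ℝ):ℂ)⁻¹ * ((inner ℂ h y : ℂ) * (inner ℂ x h : ℂ) - (α:ℂ) * ((inner ℂ g y : ℂ) * (inner ℂ x g : ℂ))) := by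
  intro x y
  rw [hRt]
  simp only [inner_smul_right, inner_sub_right]

lemma rt_herm : ∀ x y : E N, (inner ℂ x (Rt y) : ℂ) = conj (inner ℂ y (Rt x) : ℂ) := by
  intro x y
  rw [rt_inner h g d α Rt hRt, rt_inner h g d α Rt hRt]
  simp only [map_mul, map_sub, map_inv₀, Complex.conj_ofReal, inner_conj_symm]
  ring

lemma rt_smul : ∀ (c : ℂ) (x : E N), Rt (c • x) = c • Rt x := by
  intro c x
  rw [hRt, hRt]
  simp only [inner_smul_right, smul_smul, smul_sub]
  module

lemma rt_add : ∀ x y : E N, Rt (x + y) = Rt x + Rt y := by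
  intro x y
  rw [hRt, hRt, hRt]
  simp only [inner_add_right, add_smul, smul_add, smul_sub]
  module

lemma rt_zero_of (x : E N) (hh : (inner ℂ h x : ℂ) = 0) (hg : (inner ℂ g x : ℂ) = 0) : Rt x = 0 := by
  rw [hRt, hh, hg]
  simp

lemma attain (lam : ℝ) (x : E N) (hx : x ≠ 0) (he : Rt x = (lam:ℂ) • x) (s : ℝ) (hs : 0 ≤ s) :
    ∃ w : E N, ‖w‖^2 = s ∧ (inner ℂ w (Rt w) : ℂ) = ((lam * s : ℝ) : ℂ) := by
  have hxn : ‖x‖ ≠ 0 := norm_ne_zero_iff.mpr hx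
  refine ⟨((Real.sqrt s / ‖x‖ : ℝ) : ℂ) • x, ?_, ?_⟩
  · rw [norm_smul, Complex.norm_real, Real.norm_eq_abs, mul_pow, sq_abs, div_pow,
      Real.sq_sqrt hs]
    field_simp
  · rw [rt_smul h g d α Rt hRt, inner_smul_left, inner_smul_right, he, inner_smul_right,
      inner_self_eq_norm_sq_to_K, Complex.conj_ofReal]
    have hss : Real.sqrt s * Real.sqrt s = s := Real.mul_self_sqrt hs
    have H : (Real.sqrt s / ‖x‖) * ((Real.sqrt s / ‖x‖) * (lam * ‖x‖ ^ 2)) = lam * s := by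
      field_simp
      linear_combination lam * hss
    show ((Real.sqrt s/‖x‖ : ℝ):ℂ) * (((Real.sqrt s/‖x‖ : ℝ):ℂ) * (((lam:ℝ):ℂ) * ((‖x‖:ℝ):ℂ)^2)) = ((lam*s:ℝ):ℂ)
    exact_mod_cast H

end

section
variable (h g : E N) (d α : ℝ) (Rt : E N → E N)
variable (hRt : ∀ x, Rt x = ((d:ℝ):ℂ)⁻¹ • ((inner ℂ h x : ℂ) • h - ((α:ℝ):ℂ) • ((inner ℂ g x : ℂ) • g)))
variable (lam₁ lam₂ : ℝ) (x₁ x₂ : E N)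
variable (hx₁ : x₁ ≠ 0) (hx₂ : x₂ ≠ 0)
variable (he₁ : Rt x₁ = (lam₁ : ℂ) • x₁) (he₂ : Rt x₂ = (lam₂ : ℂ) • x₂)
variable (hne : lam₁ ≠ lam₂) (h1 : lam₁ ≠ 0) (h2 : lam₂ ≠ 0)
variable (hind : LinearIndependent ℂ ![h, g])

include hRt he₁ he₂ hne in
lemma orth12 : (inner ℂ x₁ x₂ : ℂ) = 0 := by
  have H := rt_herm h g d α Rt hRt x₁ x₂
  rw [he₁, he₂] at H
  simp only [inner_smul_right, map_mul, Complex.conj_ofReal, inner_conj_symm] at H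
  have : ((lam₂ : ℂ) - lam₁) * (inner ℂ x₁ x₂ : ℂ) = 0 := by rw [sub_mul, H]; ring
  rcases mul_eq_zero.1 this with h3 | h3
  · exfalso; apply hne
    have : (lam₂ : ℂ) = lam₁ := by linear_combination h3
    exact_mod_cast this.symm
  · exact h3

include hRt hx₁ hx₂ he₁ he₂ hne h1 h2 hind in
lemma mem_span12 : h ∈ Submodule.span ℂ {x₁, x₂} ∧ g ∈ Submodule.span ℂ {x₁, x₂} := by
  have horth := orth12 h g d α Rt hRt lam₁ lam₂ x₁ x₂ he₁ he₂ hne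
  have hind12 : LinearIndependent ℂ ![x₁, x₂] := by
    rw [LinearIndependent.pair_iff]
    intro s t hst
    have e1 : (inner ℂ x₁ (s • x₁ + t • x₂) : ℂ) = s * ((‖x₁‖ : ℂ)^2) := by
      simp [inner_add_right, inner_smul_right, horth, inner_self_eq_norm_sq_to_K]
    have e2 : (inner ℂ x₂ (s • x₁ + t • x₂) : ℂ) = t * ((‖x₂‖ : ℂ)^2) := by
      have horth' : (inner ℂ x₂ x₁ : ℂ) = 0 := inner_eq_zero_symm.mp horth
      simp [inner_add_right, inner_smul_right, horth', inner_self_eq_norm_sq_to_K]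
    rw [hst, inner_zero_right] at e1 e2
    have n1 : (‖x₁‖ : ℂ) ≠ 0 := by simpa using hx₁
    have n2 : (‖x₂‖ : ℂ) ≠ 0 := by simpa using hx₂
    constructor
    · rcases mul_eq_zero.1 e1.symm with h' | h'
      · exact h'
      · exact absurd h' (pow_ne_zero 2 n1)
    · rcases mul_eq_zero.1 e2.symm with h' | h'
      · exact h'
      · exact absurd h' (pow_ne_zero 2 n2)
  have hUmem : ∀ y : E N, Rt y ∈ Submodule.span ℂ {h, g} := by
    intro y
    rw [hRt]
    apply Submodule.smul_mem
    apply Submodule.sub_mem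
    · exact Submodule.smul_mem _ _ (Submodule.subset_span (by simp))
    · exact Submodule.smul_mem _ _ (Submodule.smul_mem _ _ (Submodule.subset_span (by simp)))
  have hx₁mem : x₁ ∈ Submodule.span ℂ {h, g} := by
    have : x₁ = ((lam₁ : ℂ))⁻¹ • Rt x₁ := by
      rw [he₁, smul_smul, inv_mul_cancel₀ (by exact_mod_cast h1), one_smul]
    rw [this]; exact Submodule.smul_mem _ _ (hUmem x₁)
  have hx₂mem : x₂ ∈ Submodule.span ℂ {h, g} := by
    have : x₂ = ((lam₂ : ℂ))⁻¹ • Rt x₂ := by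
      rw [he₂, smul_smul, inv_mul_cancel₀ (by exact_mod_cast h2), one_smul]
    rw [this]; exact Submodule.smul_mem _ _ (hUmem x₂)
  have hle : Submodule.span ℂ {x₁, x₂} ≤ Submodule.span ℂ {h, g} := by
    rw [Submodule.span_le]
    rintro y (rfl | rfl)
    exacts [hx₁mem, hx₂mem]
  have hr1 : Set.range ![x₁, x₂] = {x₁, x₂} := by
    simp [Matrix.range_cons, Matrix.range_empty, Set.singleton_union, Set.pair_comm x₂ x₁]
  have hr2 : Set.range ![h, g] = {h, g} := by
    simp [Matrix.range_cons, Matrix.range_empty, Set.singleton_union, Set.pair_comm g h]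
  have hf1 : Module.finrank ℂ (Submodule.span ℂ {x₁, x₂}) = 2 := by
    have := finrank_span_eq_card hind12
    rw [hr1] at this
    simpa using this
  have hf2 : Module.finrank ℂ (Submodule.span ℂ ({h, g} : Set (E N))) = 2 := by
    have := finrank_span_eq_card hind
    rw [hr2] at this
    simpa using this
  have heq : Submodule.span ℂ ({x₁, x₂} : Set (E N)) = Submodule.span ℂ {h, g} :=
    Submodule.eq_of_le_of_finrank_le hle (by rw [hf1, hf2])
  refine ⟨?_, ?_⟩ <;> rw [heq] <;> exact Submodule.subset_span (by simp)

include hRt hx₁ hx₂ he₁ he₂ hne h1 h2 hind in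
lemma decomp : ∀ w : E N, ∃ A B C : ℝ, 0 ≤ A ∧ 0 ≤ B ∧ 0 ≤ C ∧
    (inner ℂ w (Rt w) : ℂ) = ((lam₁ * A + lam₂ * B : ℝ) : ℂ) ∧ ‖w‖ ^ 2 = A + B + C := by
  intro w
  have horth := orth12 h g d α Rt hRt lam₁ lam₂ x₁ x₂ he₁ he₂ hne
  have horth' : (inner ℂ x₂ x₁ : ℂ) = 0 := inner_eq_zero_symm.mp horth
  obtain ⟨hmem, gmem⟩ := mem_span12 h g d α Rt hRt lam₁ lam₂ x₁ x₂ hx₁ hx₂ he₁ he₂ hne h1 h2 hind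
  obtain ⟨n₁, hn₁⟩ : ∃ z : ℂ, z = (inner ℂ x₁ x₁ : ℂ) := ⟨_, rfl⟩
  obtain ⟨n₂, hn₂⟩ : ∃ z : ℂ, z = (inner ℂ x₂ x₂ : ℂ) := ⟨_, rfl⟩
  have n1 : n₁ ≠ 0 := by rw [hn₁]; exact inner_self_ne_zero.mpr hx₁
  have n2 : n₂ ≠ 0 := by rw [hn₂]; exact inner_self_ne_zero.mpr hx₂
  obtain ⟨a, ha⟩ : ∃ z : ℂ, z = (inner ℂ x₁ w : ℂ) / n₁ := ⟨_, rfl⟩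
  obtain ⟨b, hb⟩ : ∃ z : ℂ, z = (inner ℂ x₂ w : ℂ) / n₂ := ⟨_, rfl⟩
  obtain ⟨r, hr⟩ : ∃ r : E N, r = w - a • x₁ - b • x₂ := ⟨_, rfl⟩
  have hw : w = a • x₁ + b • x₂ + r := by rw [hr]; abel
  have hir1 : (inner ℂ x₁ r : ℂ) = 0 := by
    rw [hr, inner_sub_right, inner_sub_right, inner_smul_right, inner_smul_right,
      horth, ← hn₁, ha, div_mul_cancel₀ _ n1]
    ring
  have hir2 : (inner ℂ x₂ r : ℂ) = 0 := by
    rw [hr, inner_sub_right, inner_sub_right, inner_smul_right, inner_smul_right,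
      horth', ← hn₂, hb, div_mul_cancel₀ _ n2]
    ring
  have hir1' : (inner ℂ r x₁ : ℂ) = 0 := inner_eq_zero_symm.mp hir1
  have hir2' : (inner ℂ r x₂ : ℂ) = 0 := inner_eq_zero_symm.mp hir2
  have hhr : (inner ℂ h r : ℂ) = 0 := by
    obtain ⟨u, v, huv⟩ := Submodule.mem_span_pair.mp hmem
    rw [← huv, inner_add_left, inner_smul_left, inner_smul_left, hir1, hir2]
    simp
  have hgr : (inner ℂ g r : ℂ) = 0 := by
    obtain ⟨u, v, huv⟩ := Submodule.mem_span_pair.mp gmem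
    rw [← huv, inner_add_left, inner_smul_left, inner_smul_left, hir1, hir2]
    simp
  have hRtr : Rt r = 0 := rt_zero_of h g d α Rt hRt r hhr hgr
  have hRtw : Rt w = (a * lam₁) • x₁ + (b * lam₂) • x₂ := by
    conv_lhs => rw [hw]
    rw [rt_add h g d α Rt hRt, rt_add h g d α Rt hRt,
      rt_smul h g d α Rt hRt, rt_smul h g d α Rt hRt, hRtr, he₁, he₂]
    rw [smul_smul, smul_smul]
    module
  have key : (inner ℂ w (Rt w) : ℂ) =
      (lam₁ : ℂ) * (a * conj a) * n₁ + (lam₂ : ℂ) * (b * conj b) * n₂ := by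
    rw [hRtw, inner_add_right, inner_smul_right, inner_smul_right]
    conv_lhs => rw [hw]
    rw [inner_add_left, inner_add_left, inner_add_left, inner_add_left,
      inner_smul_left, inner_smul_left, inner_smul_left, inner_smul_left,
      horth, horth', hir1', hir2', ← hn₁, ← hn₂]
    ring
  have keyn : (inner ℂ w w : ℂ) = (a * conj a) * n₁ + (b * conj b) * n₂ + (inner ℂ r r : ℂ) := by
    conv_lhs => rw [hw]
    simp only [inner_add_left, inner_add_right, inner_smul_left, inner_smul_right,
      horth, horth', hir1, hir2, hir1', hir2']
    rw [← hn₁, ← hn₂]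
    ring
  have hn₁' : n₁ = ((‖x₁‖ : ℂ)) ^ 2 := by rw [hn₁, inner_self_eq_norm_sq_to_K]; norm_cast
  have hn₂' : n₂ = ((‖x₂‖ : ℂ)) ^ 2 := by rw [hn₂, inner_self_eq_norm_sq_to_K]; norm_cast
  refine ⟨‖a‖ ^ 2 * ‖x₁‖ ^ 2, ‖b‖ ^ 2 * ‖x₂‖ ^ 2, ‖r‖ ^ 2,
    by positivity, by positivity, by positivity, ?_, ?_⟩
  · rw [key, Complex.mul_conj, Complex.mul_conj, hn₁', hn₂', Complex.normSq_eq_norm_sq,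
      Complex.normSq_eq_norm_sq]
    push_cast
    ring
  · have hw2 : (inner ℂ w w : ℂ) = ((‖w‖ : ℂ)) ^ 2 := by
      rw [inner_self_eq_norm_sq_to_K]; norm_cast
    have hr2 : (inner ℂ r r : ℂ) = ((‖r‖ : ℂ)) ^ 2 := by
      rw [inner_self_eq_norm_sq_to_K]; norm_cast
    rw [hw2, hr2, Complex.mul_conj, Complex.mul_conj, hn₁', hn₂', Complex.normSq_eq_norm_sq,
      Complex.normSq_eq_norm_sq] at keyn
    have H : ((‖w‖ ^ 2 : ℝ) : ℂ) =
        ((‖a‖ ^ 2 * ‖x₁‖ ^ 2 + ‖b‖ ^ 2 * ‖x₂‖ ^ 2 + ‖r‖ ^ 2 : ℝ) : ℂ) := by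
      push_cast
      push_cast at keyn
      linear_combination keyn
    exact_mod_cast H

end

end Stmt17Aux

open Stmt17Aux

set_option maxHeartbeats 1000000 in
/-- DF total-power minimization under a secrecy rate constraint in the
generic case `4^{R₀}|g₀|² ≠ |h₀|²`: with `ζ = (4^{R₀} − 1)σ²/(|h₀|² − 4^{R₀}|g₀|²)`,
`R̃ = (h h† − 4^{R₀} g g†)/(4^{R₀}|g₀|² − |h₀|²)` with positive/negative eigenvalues
`λ₁ > 0 > λ₂`, the minimum total power equals `ζ` if `ζ ≥ P_min, λ₂ ≥ −1`;
`P_min + (ζ − P_min)/(−λ₂)` if `ζ ≥ P_min, λ₂ < −1`; and `P_min + (P_min − ζ)/λ₁`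
if `ζ < P_min`. -/
theorem stmt17 {N : ℕ} (h g : EuclideanSpace ℂ (Fin N))
    (hind : LinearIndependent ℂ ![h, g])
    (σ R₀ Pmin : ℝ) (hσ : 0 < σ) (hR₀ : 0 < R₀) (hPmin : 0 ≤ Pmin)
    (h₀ g₀ : ℂ) (hne : (4 : ℝ) ^ R₀ * ‖g₀‖ ^ 2 ≠ ‖h₀‖ ^ 2)
    (ζ : ℝ) (hζ : ζ = ((4 : ℝ) ^ R₀ - 1) * σ ^ 2 /
      (‖h₀‖ ^ 2 - (4 : ℝ) ^ R₀ * ‖g₀‖ ^ 2))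
    (Rt : EuclideanSpace ℂ (Fin N) → EuclideanSpace ℂ (Fin N))
    (hRt : ∀ x, Rt x =
      ((((4 : ℝ) ^ R₀ * ‖g₀‖ ^ 2 - ‖h₀‖ ^ 2 : ℝ) : ℂ))⁻¹ •
        ((inner ℂ h x : ℂ) • h - (((4 : ℝ) ^ R₀ : ℝ) : ℂ) • ((inner ℂ g x : ℂ) • g)))
    (lam₁ lam₂ : ℝ) (hlam₁pos : 0 < lam₁) (hlam₂neg : lam₂ < 0)
    (heig₁ : ∃ x : EuclideanSpace ℂ (Fin N), x ≠ 0 ∧ Rt x = (lam₁ : ℂ) • x)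
    (heig₂ : ∃ x : EuclideanSpace ℂ (Fin N), x ≠ 0 ∧ Rt x = (lam₂ : ℂ) • x)
    (S : Set ℝ)
    (hS : S = {t : ℝ | ∃ Ps : ℝ, ∃ w : EuclideanSpace ℂ (Fin N), Pmin ≤ Ps ∧
      σ ^ 2 + Ps * ‖h₀‖ ^ 2 + ‖(inner ℂ h w : ℂ)‖ ^ 2 =
        (4 : ℝ) ^ R₀ *
          (σ ^ 2 + Ps * ‖g₀‖ ^ 2 + ‖(inner ℂ g w : ℂ)‖ ^ 2) ∧
      t = Ps + ‖w‖ ^ 2}) :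
    ((Pmin ≤ ζ ∧ -1 ≤ lam₂) → IsLeast S ζ) ∧
    ((Pmin ≤ ζ ∧ lam₂ < -1) → IsLeast S (Pmin + (ζ - Pmin) / (-lam₂))) ∧
    (ζ < Pmin → IsLeast S (Pmin + (Pmin - ζ) / lam₁)) := by
  obtain ⟨x₁, hx₁0, hx₁e⟩ := heig₁
  obtain ⟨x₂, hx₂0, hx₂e⟩ := heig₂
  have hlt : lam₂ < lam₁ := hlam₂neg.trans hlam₁pos
  have hne12 : lam₁ ≠ lam₂ := ne_of_gt hlt
  have h1 : lam₁ ≠ 0 := ne_of_gt hlam₁pos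
  have h2 : lam₂ ≠ 0 := ne_of_lt hlam₂neg
  have hd : ((4:ℝ)^R₀ * ‖g₀‖ ^ 2 - ‖h₀‖ ^ 2) ≠ 0 := sub_ne_zero.mpr hne
  have hd' : (‖h₀‖ ^ 2 - (4:ℝ)^R₀ * ‖g₀‖ ^ 2) ≠ 0 := by
    intro H
    exact hd (by linarith [sub_eq_zero.mp H])
  have hζd : ζ * (‖h₀‖ ^ 2 - (4:ℝ)^R₀ * ‖g₀‖ ^ 2) = ((4:ℝ)^R₀ - 1) * σ^2 := by
    rw [hζ]
    field_simp
  set Qf : EuclideanSpace ℂ (Fin N) → ℝ := fun w =>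
    (‖(inner ℂ h w : ℂ)‖^2 - (4:ℝ)^R₀ * ‖(inner ℂ g w : ℂ)‖^2) /
      ((4:ℝ)^R₀ * ‖g₀‖ ^ 2 - ‖h₀‖ ^ 2) with hQf
  -- the quadratic form identity
  have idQ : ∀ w : EuclideanSpace ℂ (Fin N), (inner ℂ w (Rt w) : ℂ) = ((Qf w : ℝ) : ℂ) := by
    intro w
    rw [rt_inner h g _ _ Rt hRt w w]
    have e1 : (inner ℂ w h : ℂ) = conj (inner ℂ h w : ℂ) := (inner_conj_symm _ _).symm
    have e2 : (inner ℂ w g : ℂ) = conj (inner ℂ g w : ℂ) := (inner_conj_symm _ _).symm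
    rw [e1, e2, Complex.mul_conj, Complex.mul_conj, Complex.normSq_eq_norm_sq, Complex.normSq_eq_norm_sq,
      hQf]
    have hdC : (((4:ℝ)^R₀ * ‖g₀‖ ^ 2 - ‖h₀‖ ^ 2 : ℝ) : ℂ) ≠ 0 :=
      Complex.ofReal_ne_zero.mpr hd
    field_simp
    rw [Complex.ofReal_div, mul_div_assoc', mul_div_cancel_left₀ _ hdC]
    push_cast
    ring
  -- the constraint reformulation
  have hcon : ∀ (Ps : ℝ) (w : EuclideanSpace ℂ (Fin N)),
      (σ ^ 2 + Ps * ‖h₀‖ ^ 2 + ‖(inner ℂ h w : ℂ)‖ ^ 2 =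
        (4 : ℝ) ^ R₀ * (σ ^ 2 + Ps * ‖g₀‖ ^ 2 + ‖(inner ℂ g w : ℂ)‖ ^ 2)) ↔
      Qf w = Ps - ζ := by
    intro Ps w
    rw [hQf]
    simp only
    rw [div_eq_iff hd]
    constructor
    · intro H
      linear_combination H - hζd
    · intro H
      linear_combination H + hζd
  -- bounds on the quadratic form
  have bounds : ∀ w : EuclideanSpace ℂ (Fin N),
      lam₂ * ‖w‖^2 ≤ Qf w ∧ Qf w ≤ lam₁ * ‖w‖^2 := by
    intro w
    obtain ⟨A, B, C, hA, hB, hC, hq, hn⟩ :=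
      decomp h g _ _ Rt hRt lam₁ lam₂ x₁ x₂ hx₁0 hx₂0 hx₁e hx₂e hne12 h1 h2 hind w
    have hQc : ((Qf w : ℝ) : ℂ) = ((lam₁ * A + lam₂ * B : ℝ) : ℂ) := by rw [← idQ w, hq]
    have hQ : Qf w = lam₁ * A + lam₂ * B := by exact_mod_cast hQc
    have p1 : lam₂ * A ≤ lam₁ * A := mul_le_mul_of_nonneg_right hlt.le hA
    have p2 : lam₂ * B ≤ lam₁ * B := mul_le_mul_of_nonneg_right hlt.le hB
    have p3 : lam₂ * C ≤ 0 := mul_nonpos_of_nonpos_of_nonneg hlam₂neg.le hC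
    have p4 : 0 ≤ lam₁ * C := mul_nonneg hlam₁pos.le hC
    constructor
    · rw [hQ, hn]; nlinarith
    · rw [hQ, hn]; nlinarith
  -- attainment
  have attQ : ∀ (lam : ℝ) (x : EuclideanSpace ℂ (Fin N)), x ≠ 0 → Rt x = (lam : ℂ) • x →
      ∀ s : ℝ, 0 ≤ s → ∃ w : EuclideanSpace ℂ (Fin N), ‖w‖^2 = s ∧ Qf w = lam * s := by
    intro lam x hx he s hs
    obtain ⟨w, hw1, hw2⟩ := attain h g _ _ Rt hRt lam x hx he s hs
    refine ⟨w, hw1, ?_⟩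
    have : ((Qf w : ℝ) : ℂ) = ((lam * s : ℝ) : ℂ) := by rw [← idQ w, hw2]
    exact_mod_cast this
  refine ⟨?_, ?_, ?_⟩
  · -- case 1 : ζ ≥ Pmin, lam₂ ≥ -1
    rintro ⟨hc1, hc2⟩
    constructor
    · rw [hS]
      refine ⟨ζ, 0, hc1, ?_, by simp⟩
      rw [hcon]
      have : Qf 0 = 0 := by
        rw [hQf]; simp
      rw [this]; ring
    · rintro t ht
      rw [hS] at ht
      obtain ⟨Ps, w, hP, hc, rfl⟩ := ht
      have hQc := (hcon Ps w).mp hc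
      obtain ⟨hLB, hUB⟩ := bounds w
      have hn' : (0:ℝ) ≤ ‖w‖^2 := by positivity
      nlinarith [mul_nonneg (show (0:ℝ) ≤ lam₂ + 1 by linarith) hn']
  · -- case 2 : ζ ≥ Pmin, lam₂ < -1
    rintro ⟨hc1, hc2⟩
    have hnl2 : -lam₂ ≠ 0 := by intro H; exact h2 (by linarith)
    have hT : ((ζ - Pmin) / (-lam₂)) * (-lam₂) = ζ - Pmin := div_mul_cancel₀ _ hnl2
    constructor
    · rw [hS]
      have hs : 0 ≤ (ζ - Pmin) / (-lam₂) := div_nonneg (by linarith) (by linarith)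
      obtain ⟨w, hw1, hw2⟩ := attQ lam₂ x₂ hx₂0 hx₂e _ hs
      refine ⟨Pmin, w, le_refl _, ?_, by rw [hw1]⟩
      rw [hcon, hw2]
      field_simp
      ring
    · rintro t ht
      rw [hS] at ht
      obtain ⟨Ps, w, hP, hc, rfl⟩ := ht
      have hQc := (hcon Ps w).mp hc
      obtain ⟨hLB, hUB⟩ := bounds w
      have hn' : (0:ℝ) ≤ ‖w‖^2 := by positivity
      nlinarith [hT, mul_nonneg (show (0:ℝ) ≤ -lam₂ - 1 by linarith)
        (show (0:ℝ) ≤ Ps - Pmin by linarith)]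
  · -- case 3 : ζ < Pmin
    intro hc1
    have hT : ((Pmin - ζ) / lam₁) * lam₁ = Pmin - ζ := div_mul_cancel₀ _ h1
    constructor
    · rw [hS]
      have hs : 0 ≤ (Pmin - ζ) / lam₁ := div_nonneg (by linarith) hlam₁pos.le
      obtain ⟨w, hw1, hw2⟩ := attQ lam₁ x₁ hx₁0 hx₁e _ hs
      refine ⟨Pmin, w, le_refl _, ?_, by rw [hw1]⟩
      rw [hcon, hw2]
      field_simp
    · rintro t ht
      rw [hS] at ht
      obtain ⟨Ps, w, hP, hc, rfl⟩ := ht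
      have hQc := (hcon Ps w).mp hc
      obtain ⟨hLB, hUB⟩ := bounds w
      have hn' : (0:ℝ) ≤ ‖w‖^2 := by positivity
      nlinarith [hT, mul_nonneg (show (0:ℝ) ≤ lam₁ by linarith)
        (show (0:ℝ) ≤ Ps - Pmin by linarith)]
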